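/- There exist linearly ordered sets A, B, C, each equipped with two strictly monotone unary operations f and h, and order embeddings i_A : C → A, i_B : C → B commuting with both operations, such that there is no linearly ordered set D equipped with two (not necessarily strictly) monotone unary operations f_D, h_D admitting order embeddings j_A : A → D, j_B : B → D commuting with both operations and satisfying j_A ∘ i_A = j_B ∘ i_B. In particular, the class of linearly ordered sets with two strict order preserving unary operations does not have the amalgamation property. -/

import Mathlib

/-- A linearly ordered set equipped with two strict order preserving (strictly
monotone) unary operations. -/
structure LinOrderTwoStrictMono where
  carrier : Type
  [linOrd : LinearOrder carrier]
  f : carrier → carrier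
  h : carrier → carrier
  smonoF : StrictMono f
  smonoH : StrictMono h

attribute [instance] LinOrderTwoStrictMono.linOrd

/-- A linearly ordered set equipped with two order preserving (monotone) unary
operations. -/
structure LinOrderTwoMono where
  carrier : Type
  [linOrd : LinearOrder carrier]
  f : carrier → carrier
  h : carrier → carrier
  monoF : Monotone f
  monoH : Monotone h

attribute [instance] LinOrderTwoMono.linOrd

/-- `k ↦ 3k + (k mod 2)` is strictly monotone on `ℤ`. -/
lemma amalg_smono1 : StrictMono (fun k : ℤ => 3 * k + k % 2) := by
  intro a b hab; dsimp only; omega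

/-- `k ↦ 3k - (k mod 2)` is strictly monotone on `ℤ`. -/
lemma amalg_smono2 : StrictMono (fun k : ℤ => 3 * k - k % 2) := by
  intro a b hab; dsimp only; omega

/-- `k ↦ 3k` is strictly monotone on `ℤ`. -/
lemma amalg_smono3 : StrictMono (fun k : ℤ => 3 * k) := by
  intro a b hab; dsimp only; omega

/-- The structure `A` of the counterexample: `ℤ`, where even numbers `2n`
represent the integers `n` of the common substructure `C`, and odd numbers
are extra points. -/
abbrev amalgA : LinOrderTwoStrictMono :=
  { carrier := ℤ
    f := fun k => 3 * k + k % 2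
    h := fun k => 3 * k - k % 2
    smonoF := amalg_smono1
    smonoH := amalg_smono2 }

/-- The structure `B` of the counterexample: same as `A` with the two
operations swapped. -/
abbrev amalgB : LinOrderTwoStrictMono :=
  { carrier := ℤ
    f := fun k => 3 * k - k % 2
    h := fun k => 3 * k + k % 2
    smonoF := amalg_smono2
    smonoH := amalg_smono1 }

/-- The common substructure `C` of the counterexample: `ℤ` with both
operations equal to multiplication by `3`. -/
abbrev amalgC : LinOrderTwoStrictMono :=
  { carrier := ℤ
    f := fun k => 3 * k
    h := fun k => 3 * k
    smonoF := amalg_smono3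
    smonoH := amalg_smono3 }

/-- The embedding `n ↦ 2n` of `ℤ` into `ℤ`. -/
noncomputable abbrev amalgEmb : (ℤ : Type) ↪o ℤ :=
  OrderEmbedding.ofStrictMono (fun n : ℤ => 2 * n) (by intro a b hab; dsimp only; omega)

lemma amalgEmb_apply (n : ℤ) : amalgEmb n = 2 * n := rfl

/-- There is a triple of linearly ordered sets with two strictly monotone unary
operations which cannot be amalgamated even into a linearly ordered set with two
(not necessarily strictly) monotone unary operations.  In particular, the class
of linearly ordered sets with two strict order preserving unary operations does
not have the amalgamation property. -/
theorem linear_orders_two_strict_monotone_ops_not_amalgamation :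
    ∃ (A B C : LinOrderTwoStrictMono)
      (iA : C.carrier ↪o A.carrier) (iB : C.carrier ↪o B.carrier),
      (∀ c, iA (C.f c) = A.f (iA c)) ∧ (∀ c, iA (C.h c) = A.h (iA c)) ∧
      (∀ c, iB (C.f c) = B.f (iB c)) ∧ (∀ c, iB (C.h c) = B.h (iB c)) ∧
      ¬ ∃ (D : LinOrderTwoMono) (jA : A.carrier ↪o D.carrier)
          (jB : B.carrier ↪o D.carrier),
          (∀ a, jA (A.f a) = D.f (jA a)) ∧ (∀ a, jA (A.h a) = D.h (jA a)) ∧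
          (∀ b, jB (B.f b) = D.f (jB b)) ∧ (∀ b, jB (B.h b) = D.h (jB b)) ∧
          (∀ c, jA (iA c) = jB (iB c)) := by
  refine ⟨amalgA, amalgB, amalgC, amalgEmb, amalgEmb, ?_, ?_, ?_, ?_, ?_⟩
  · intro c
    show (2 * (3 * c) : ℤ) = 3 * (2 * c) + (2 * c) % 2
    omega
  · intro c
    show (2 * (3 * c) : ℤ) = 3 * (2 * c) - (2 * c) % 2
    omega
  · intro c
    show (2 * (3 * c) : ℤ) = 3 * (2 * c) - (2 * c) % 2
    omega
  · intro c
    show (2 * (3 * c) : ℤ) = 3 * (2 * c) + (2 * c) % 2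
    omega
  rintro ⟨D, jA, jB, hfA, hhA, hfB, hhB, hcomm⟩
  -- common images of the `C`-points `1` and `2` (represented by `2` and `4`)
  have key4 : jA 4 = jB 4 := by
    have := hcomm 2
    rwa [show amalgEmb 2 = (4 : ℤ) from rfl] at this
  have key2 : jA 2 = jB 2 := by
    have := hcomm 1
    rwa [show amalgEmb 1 = (2 : ℤ) from rfl] at this
  -- values of the operations at the extra point `1` of `A` and of `B`
  have hA1f : jA 4 = D.f (jA 1) := by
    have := hfA 1
    rwa [show amalgA.f 1 = (4 : ℤ) from rfl] at this
  have hA1h : jA 2 = D.h (jA 1) := by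
    have := hhA 1
    rwa [show amalgA.h 1 = (2 : ℤ) from rfl] at this
  have hB1f : jB 2 = D.f (jB 1) := by
    have := hfB 1
    rwa [show amalgB.f 1 = (2 : ℤ) from rfl] at this
  have hB1h : jB 4 = D.h (jB 1) := by
    have := hhB 1
    rwa [show amalgB.h 1 = (4 : ℤ) from rfl] at this
  rcases le_total (jA 1) (jB 1) with hle | hle
  · have := D.monoF hle
    rw [← hA1f, ← hB1f, key4] at this
    have h42 : (4 : ℤ) ≤ 2 := jB.le_iff_le.mp this
    omega
  · have := D.monoH hle
    rw [← hB1h, ← hA1h, key2] at this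
    have h42 : (4 : ℤ) ≤ 2 := jB.le_iff_le.mp this
    omega
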